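/- For p > 1 there exist ζ ∈ (0,1) with p - 1 - ζ > 0 and a constant C > 0 such that for all complex numbers a, b: | |a+b|^{p-1}(a+b) - |a|^{p-1} a - |a|^{p-1} b - (p-1)|a|^{p-3} a Re(a b̄) | ≤ C ( |a|^{p-1-ζ} |b|^{1+ζ} + |b|^p ). -/

import Mathlib

open Real Set ContinuousLinearMap

noncomputable abbrev cc (q : ℝ) : ℝ := (2:ℝ) ^ q + (2:ℝ) ^ (-q)

lemma cc_pos (q : ℝ) : 0 < cc q := by unfold cc; positivity

lemma tau_le {a : ℂ} (ha : a ≠ 0) (q : ℝ) {t : ℝ} (h1 : ‖a‖/2 ≤ t) (h2 : t ≤ 2*‖a‖) :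
    t ^ q ≤ cc q * ‖a‖ ^ q := by
  have h0 : (0:ℝ) < ‖a‖ := norm_pos_iff.2 ha
  have h2q : (0:ℝ) < (2:ℝ) ^ q := Real.rpow_pos_of_pos two_pos q
  have h2q' : (0:ℝ) < (2:ℝ) ^ (-q) := Real.rpow_pos_of_pos two_pos (-q)
  have haq : (0:ℝ) ≤ ‖a‖ ^ q := (Real.rpow_pos_of_pos h0 q).le
  rcases le_or_gt 0 q with h | h
  · have : t ^ q ≤ (2*‖a‖) ^ q := Real.rpow_le_rpow (by linarith [h0.le]) h2 h
    have e : (2*‖a‖) ^ q = (2:ℝ)^q * ‖a‖^q := Real.mul_rpow (by norm_num) (norm_nonneg a)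
    calc t ^ q ≤ (2:ℝ)^q * ‖a‖^q := by rw [← e]; exact this
      _ ≤ cc q * ‖a‖ ^ q := by unfold cc; nlinarith
  · have : t ^ q ≤ (‖a‖/2) ^ q :=
      Real.rpow_le_rpow_of_nonpos (by linarith) h1 h.le
    have e : (‖a‖/2) ^ q = ‖a‖^q * (2:ℝ)^(-q) := by
      rw [Real.div_rpow (norm_nonneg a) (by norm_num), Real.rpow_neg (by norm_num)]
      ring
    calc t ^ q ≤ ‖a‖^q * (2:ℝ)^(-q) := by rw [← e]; exact this
      _ ≤ cc q * ‖a‖ ^ q := by unfold cc; nlinarith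

lemma rpow_diff_le {a : ℂ} (ha : a ≠ 0) (q : ℝ) {r s : ℝ}
    (hr1 : ‖a‖/2 ≤ r) (hr2 : r ≤ 2*‖a‖) (hs1 : ‖a‖/2 ≤ s) (hs2 : s ≤ 2*‖a‖) :
    |r ^ q - s ^ q| ≤ |q| * (cc (q-1) * ‖a‖ ^ (q-1)) * |r - s| := by
  have h0 : (0:ℝ) < ‖a‖ := norm_pos_iff.2 ha
  have hconv : Convex ℝ (Icc (‖a‖/2) (2*‖a‖)) := convex_Icc _ _
  have key := hconv.norm_image_sub_le_of_norm_hasDerivWithin_le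
    (f := fun t : ℝ => t ^ q) (f' := fun t : ℝ => q * t ^ (q-1))
    (C := |q| * (cc (q-1) * ‖a‖ ^ (q-1)))
    (fun t ht => (Real.hasDerivAt_rpow_const (p := q)
      (Or.inl (ne_of_gt (by have := ht.1; linarith)))).hasDerivWithinAt)
    (fun t ht => by
      have h1 : t ^ (q-1) ≤ cc (q-1) * ‖a‖ ^ (q-1) := tau_le ha (q-1) ht.1 ht.2
      have h2 : (0:ℝ) ≤ t ^ (q-1) := Real.rpow_nonneg (by have := ht.1; linarith) _
      rw [Real.norm_eq_abs, abs_mul, abs_of_nonneg h2]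
      exact mul_le_mul_of_nonneg_left h1 (abs_nonneg q))
    ⟨hs1, hs2⟩ ⟨hr1, hr2⟩
  simpa [Real.norm_eq_abs] using key

noncomputable def phi (p : ℝ) (z : ℂ) : ℂ →L[ℝ] ℂ :=
  (‖z‖ ^ (p-1) : ℝ) • ContinuousLinearMap.id ℝ ℂ
    + ((p-1) * ‖z‖ ^ (p-3)) • ((innerSL ℝ z).smulRight z)

lemma phi_apply (p : ℝ) (z b : ℂ) :
    phi p z b = (‖z‖ ^ (p-1) : ℝ) • b
      + ((p-1) * ‖z‖ ^ (p-3)) • ((inner ℝ z b : ℝ) • z) := by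
  simp [phi]

lemma sq_rpow_helper (x : ℝ) (hx : 0 ≤ x) (q : ℝ) : (x^2) ^ q = x ^ (2*q) := by
  rw [← Real.rpow_natCast x 2, ← Real.rpow_mul hx]
  norm_num

lemma hasFDerivAt_F (p : ℝ) {z : ℂ} (hz : z ≠ 0) :
    HasFDerivAt (fun w : ℂ => (‖w‖ ^ (p-1) : ℝ) • w) (phi p z) z := by
  have h0 : (0:ℝ) < ‖z‖ := norm_pos_iff.2 hz
  have hsq : (0:ℝ) < ‖z‖^2 := by positivity
  have h1 : HasFDerivAt (fun w : ℂ => ‖w‖^2) (2 • (innerSL ℝ z)) z :=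
    (hasFDerivAt_id z).norm_sq.congr_fderiv (by ext b; simp)
  have h2 : HasDerivAt (fun t : ℝ => t ^ ((p-1)/2))
      (((p-1)/2) * (‖z‖^2) ^ ((p-1)/2 - 1)) (‖z‖^2) :=
    Real.hasDerivAt_rpow_const (Or.inl hsq.ne')
  have hg : HasFDerivAt (fun w : ℂ => ‖w‖ ^ (p-1))
      ((((p-1)/2) * (‖z‖^2) ^ ((p-1)/2 - 1)) • (2 • (innerSL ℝ z))) z := by
    have := h2.comp_hasFDerivAt z h1
    refine HasFDerivAt.congr_of_eventuallyEq this ?_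
    filter_upwards [] with w
    show ‖w‖ ^ (p-1) = (‖w‖^2) ^ ((p-1)/2)
    rw [sq_rpow_helper _ (norm_nonneg w)]
    congr 1
    ring
  have hF := hg.smul (hasFDerivAt_id z)
  refine hF.congr_fderiv ?_
  ext b
  have e1 : (‖z‖^2) ^ ((p-1)/2 - 1) = ‖z‖ ^ (p-3) := by
    rw [sq_rpow_helper _ (norm_nonneg z)]
    ring_nf
  simp only [phi, ContinuousLinearMap.add_apply, ContinuousLinearMap.smul_apply,
    ContinuousLinearMap.coe_id', id_eq, ContinuousLinearMap.smulRight_apply,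
    ContinuousLinearMap.coe_smul', Pi.smul_apply, innerSL_apply_apply, e1]
  match_scalars <;> simp only [smul_eq_mul] <;> ring

noncomputable def K1 (p : ℝ) : ℝ := (p-1) * (cc (p-2) + 4 * |p - 3| * cc (p-4) + 4*cc (p-3))

lemma K1_pos (p : ℝ) (hp : 1 < p) : 0 < K1 p := by
  have hp1 : (0:ℝ) < p - 1 := by linarith
  unfold K1; positivity

lemma phi_lip (p : ℝ) (hp : 1 < p) {a x y : ℂ} (ha : a ≠ 0)
    (hx1 : ‖a‖/2 ≤ ‖x‖) (hx2 : ‖x‖ ≤ 2*‖a‖) (hy1 : ‖a‖/2 ≤ ‖y‖) (hy2 : ‖y‖ ≤ 2*‖a‖) :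
    ‖phi p x - phi p y‖ ≤ K1 p * ‖a‖ ^ (p-2) * ‖x - y‖ := by
  have h0 : (0:ℝ) < ‖a‖ := norm_pos_iff.2 ha
  have hp1 : (0:ℝ) < p - 1 := by linarith
  set A := ‖a‖ ^ (p-2) with hA
  have hA0 : 0 < A := Real.rpow_pos_of_pos h0 _
  set L := ‖x - y‖ with hL
  have hL0 : 0 ≤ L := norm_nonneg _
  have eA1 : ‖a‖ ^ (p-3) * ‖a‖ = A := by
    rw [← Real.rpow_add_one h0.ne', hA]; ring_nf
  have eA2 : ‖a‖ ^ (p-4) * ‖a‖ * ‖a‖ = A := by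
    rw [← Real.rpow_add_one h0.ne', ← Real.rpow_add_one h0.ne', hA]; ring_nf
  refine ContinuousLinearMap.opNorm_le_bound _
    (mul_nonneg (mul_nonneg (K1_pos p hp).le hA0.le) hL0) fun b => ?_
  set B := ‖b‖ with hB
  have hB0 : 0 ≤ B := norm_nonneg _
  have hxn : |‖x‖ - ‖y‖| ≤ L := abs_norm_sub_norm_le x y
  have decomp : phi p x b - phi p y b =
      (‖x‖ ^ (p-1) - ‖y‖ ^ (p-1)) • b
      + ((p-1) * (‖x‖ ^ (p-3) - ‖y‖ ^ (p-3)) * (inner ℝ x b : ℝ)) • x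
      + ((p-1) * ‖y‖ ^ (p-3) * (inner ℝ (x-y) b : ℝ)) • x
      + ((p-1) * ‖y‖ ^ (p-3) * (inner ℝ y b : ℝ)) • (x - y) := by
    simp only [phi_apply, inner_sub_left]
    match_scalars <;> ring
  have hd1 : |‖x‖ ^ (p-1) - ‖y‖ ^ (p-1)| ≤ (p-1) * (cc (p-2) * ‖a‖ ^ (p-2)) * L := by
    have := rpow_diff_le ha (p-1) hx1 hx2 hy1 hy2
    calc |‖x‖ ^ (p-1) - ‖y‖ ^ (p-1)| ≤ |p-1| * (cc (p-1-1) * ‖a‖ ^ (p-1-1)) * |‖x‖ - ‖y‖| := this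
      _ ≤ (p-1) * (cc (p-2) * ‖a‖ ^ (p-2)) * L := by
          rw [abs_of_pos hp1]
          have e : p - 1 - 1 = p - 2 := by ring
          rw [e]
          gcongr
  have hd3 : |‖x‖ ^ (p-3) - ‖y‖ ^ (p-3)| ≤ |p-3| * (cc (p-4) * ‖a‖ ^ (p-4)) * L := by
    have := rpow_diff_le ha (p-3) hx1 hx2 hy1 hy2
    calc |‖x‖ ^ (p-3) - ‖y‖ ^ (p-3)| ≤ |p-3| * (cc (p-3-1) * ‖a‖ ^ (p-3-1)) * |‖x‖ - ‖y‖| := this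
      _ ≤ |p-3| * (cc (p-4) * ‖a‖ ^ (p-4)) * L := by
          have e : p - 3 - 1 = p - 4 := by ring
          rw [e]
          gcongr
  have hy3 : ‖y‖ ^ (p-3) ≤ cc (p-3) * ‖a‖ ^ (p-3) := tau_le ha _ hy1 hy2
  have hy3' : (0:ℝ) ≤ ‖y‖ ^ (p-3) := Real.rpow_nonneg (norm_nonneg y) _
  have hib : |(inner ℝ x b : ℝ)| ≤ ‖x‖ * B := abs_real_inner_le_norm x b
  have hiyb : |(inner ℝ y b : ℝ)| ≤ ‖y‖ * B := abs_real_inner_le_norm y b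
  have hiyb2 : |(inner ℝ y b : ℝ)| ≤ 2 * ‖a‖ * B :=
    hiyb.trans (mul_le_mul_of_nonneg_right hy2 hB0)
  have hixy : |(inner ℝ (x-y) b : ℝ)| ≤ L * B := abs_real_inner_le_norm (x-y) b
  rw [ContinuousLinearMap.sub_apply, decomp]
  have hT1 : ‖(‖x‖ ^ (p-1) - ‖y‖ ^ (p-1)) • b‖ ≤ (p-1) * cc (p-2) * A * (L * B) := by
    rw [norm_smul, Real.norm_eq_abs]
    calc |‖x‖ ^ (p-1) - ‖y‖ ^ (p-1)| * B ≤ ((p-1) * (cc (p-2) * ‖a‖ ^ (p-2)) * L) * B := by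
          gcongr
      _ = (p-1) * cc (p-2) * A * (L * B) := by rw [hA]; ring
  have hT2 : ‖((p-1) * (‖x‖ ^ (p-3) - ‖y‖ ^ (p-3)) * (inner ℝ x b : ℝ)) • x‖
      ≤ (p-1) * (4 * |p - 3| * cc (p-4)) * A * (L * B) := by
    rw [norm_smul, Real.norm_eq_abs, abs_mul, abs_mul, abs_of_pos hp1]
    calc (p-1) * |‖x‖ ^ (p-3) - ‖y‖ ^ (p-3)| * |(inner ℝ x b : ℝ)| * ‖x‖
        ≤ (p-1) * (|p-3| * (cc (p-4) * ‖a‖ ^ (p-4)) * L) * (‖x‖ * B) * ‖x‖ := by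
          gcongr
      _ ≤ (p-1) * (|p-3| * (cc (p-4) * ‖a‖ ^ (p-4)) * L) * ((2*‖a‖) * B) * (2*‖a‖) := by
          gcongr <;> positivity
      _ = (p-1) * (4 * |p - 3| * cc (p-4)) * (‖a‖ ^ (p-4) * ‖a‖ * ‖a‖) * (L * B) := by ring
      _ = (p-1) * (4 * |p - 3| * cc (p-4)) * A * (L * B) := by rw [eA2]
  have hT3 : ‖((p-1) * ‖y‖ ^ (p-3) * (inner ℝ (x-y) b : ℝ)) • x‖
      ≤ (p-1) * (2*cc (p-3)) * A * (L * B) := by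
    rw [norm_smul, Real.norm_eq_abs, abs_mul, abs_mul, abs_of_pos hp1, abs_of_nonneg hy3']
    calc (p-1) * ‖y‖ ^ (p-3) * |(inner ℝ (x-y) b : ℝ)| * ‖x‖
        ≤ (p-1) * (cc (p-3) * ‖a‖ ^ (p-3)) * (L * B) * (2*‖a‖) := by gcongr <;> positivity
      _ = (p-1) * (2*cc (p-3)) * (‖a‖ ^ (p-3) * ‖a‖) * (L * B) := by ring
      _ = (p-1) * (2*cc (p-3)) * A * (L * B) := by rw [eA1]
  have hT4 : ‖((p-1) * ‖y‖ ^ (p-3) * (inner ℝ y b : ℝ)) • (x - y)‖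
      ≤ (p-1) * (2*cc (p-3)) * A * (L * B) := by
    rw [norm_smul, Real.norm_eq_abs, abs_mul, abs_mul, abs_of_pos hp1, abs_of_nonneg hy3']
    calc (p-1) * ‖y‖ ^ (p-3) * |(inner ℝ y b : ℝ)| * ‖x - y‖
        ≤ (p-1) * (cc (p-3) * ‖a‖ ^ (p-3)) * (2 * ‖a‖ * B) * L := by
          gcongr <;> positivity
      _ = (p-1) * (2*cc (p-3)) * (‖a‖ ^ (p-3) * ‖a‖) * (L * B) := by ring
      _ = (p-1) * (2*cc (p-3)) * A * (L * B) := by rw [eA1]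
  refine le_trans (norm_add_le _ _) ?_
  refine le_trans (add_le_add_left (norm_add_le _ _) _) ?_
  refine le_trans (add_le_add_left (add_le_add_left (norm_add_le _ _) _) _) ?_
  have hsum : (p-1) * cc (p-2) * A * (L * B) + (p-1) * (4 * |p - 3| * cc (p-4)) * A * (L * B)
      + (p-1) * (2*cc (p-3)) * A * (L * B) + (p-1) * (2*cc (p-3)) * A * (L * B)
      = K1 p * A * L * B := by unfold K1; ring
  linarith [hT1, hT2, hT3, hT4]

/-- quadratic remainder estimate for the nonlinearity
`N(b) = |a+b|^{p-1}(a+b) - |a|^{p-1}a - |a|^{p-1}b - (p-1)|a|^{p-3} a Re(a b̄)`. -/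
theorem stmt11 (p : ℝ) (hp : 1 < p) :
    ∃ ζ ∈ Set.Ioo (0 : ℝ) 1, 0 < p - 1 - ζ ∧
      ∃ C > 0, ∀ a b : ℂ,
        ‖(‖a + b‖ ^ (p - 1) : ℝ) • (a + b) - (‖a‖ ^ (p - 1) : ℝ) • a
            - (‖a‖ ^ (p - 1) : ℝ) • b
            - (((p - 1) * ‖a‖ ^ (p - 3) * (a * (starRingEnd ℂ) b).re : ℝ) • a)‖
          ≤ C * (‖a‖ ^ (p - 1 - ζ) * ‖b‖ ^ (1 + ζ) + ‖b‖ ^ p) := by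
  have hp0 : (0:ℝ) < p := by linarith
  have hp1 : (0:ℝ) < p - 1 := by linarith
  set ζ := min (1/2 : ℝ) ((p-1)/2) with hζ
  have hz0 : 0 < ζ := lt_min (by norm_num) (by linarith)
  have hz12 : ζ ≤ 1/2 := min_le_left _ _
  have hzp : ζ ≤ (p-1)/2 := min_le_right _ _
  set K2 : ℝ := (3:ℝ)^p + (2:ℝ)^p + (2:ℝ)^(p-1) + (p-1)*(2:ℝ)^(p-1) with hK2
  have hK2pos : 0 < K2 := by
    have h3 : (0:ℝ) < (3:ℝ)^p := Real.rpow_pos_of_pos (by norm_num) _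
    have h2 : (0:ℝ) < (2:ℝ)^p := Real.rpow_pos_of_pos (by norm_num) _
    have h2' : (0:ℝ) < (2:ℝ)^(p-1) := Real.rpow_pos_of_pos (by norm_num) _
    rw [hK2]; nlinarith
  set C := K1 p + K2 + 1 with hC
  have hCpos : 0 < C := by have := K1_pos p hp; rw [hC]; linarith
  refine ⟨ζ, ⟨hz0, by linarith⟩, by linarith, C, hCpos, fun a b => ?_⟩
  have ht1 : (0:ℝ) ≤ ‖a‖ ^ (p - 1 - ζ) * ‖b‖ ^ (1 + ζ) :=
    mul_nonneg (Real.rpow_nonneg (norm_nonneg a) _) (Real.rpow_nonneg (norm_nonneg b) _)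
  have ht2 : (0:ℝ) ≤ ‖b‖ ^ p := Real.rpow_nonneg (norm_nonneg b) _
  -- trivial case b = 0
  rcases eq_or_ne b 0 with rfl | hb
  · simp only [add_zero, map_zero, mul_zero, Complex.zero_re, smul_zero, mul_zero, zero_smul,
      sub_zero, sub_self, norm_zero]
    positivity
  have hb0 : (0:ℝ) < ‖b‖ := norm_pos_iff.2 hb
  -- rewrite LHS via phi
  have hinner : (inner ℝ a b : ℝ) = (a * (starRingEnd ℂ) b).re := by
    rw [Complex.inner]
    simp [Complex.mul_re]
    ring
  have keyX : (‖a + b‖ ^ (p - 1) : ℝ) • (a + b) - (‖a‖ ^ (p - 1) : ℝ) • a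
            - (‖a‖ ^ (p - 1) : ℝ) • b
            - (((p - 1) * ‖a‖ ^ (p - 3) * (a * (starRingEnd ℂ) b).re : ℝ) • a)
      = (‖a + b‖ ^ (p - 1) : ℝ) • (a + b) - (‖a‖ ^ (p - 1) : ℝ) • a - phi p a b := by
    rw [phi_apply, ← hinner]
    match_scalars <;> ring
  rw [keyX]
  rcases le_or_gt ‖b‖ (‖a‖/2) with hcase | hcase
  · -- small perturbation case
    have ha0 : (0:ℝ) < ‖a‖ := by linarith
    have ha : a ≠ 0 := norm_pos_iff.1 ha0
    have hA0 : (0:ℝ) < ‖a‖ ^ (p-2) := Real.rpow_pos_of_pos ha0 _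
    have hball : ∀ z ∈ Metric.closedBall a ‖b‖, ‖a‖/2 ≤ ‖z‖ ∧ ‖z‖ ≤ 2*‖a‖ := by
      intro z hz
      rw [Metric.mem_closedBall, dist_eq_norm] at hz
      have h1 : ‖a‖ - ‖z‖ ≤ ‖z - a‖ := by
        have := norm_sub_norm_le a z
        rwa [norm_sub_rev z a]
      have h2 : ‖z‖ - ‖a‖ ≤ ‖z - a‖ := norm_sub_norm_le z a
      constructor <;> linarith
    have mvt := (convex_closedBall a ‖b‖).norm_image_sub_le_of_norm_hasFDerivWithin_le'
      (f := fun w : ℂ => (‖w‖ ^ (p-1) : ℝ) • w) (f' := fun z => phi p z) (φ := phi p a)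
      (C := K1 p * ‖a‖ ^ (p-2) * ‖b‖)
      (fun z hz => by
        have hzpos : z ≠ 0 := by
          have := (hball z hz).1
          exact norm_pos_iff.1 (by linarith)
        exact (hasFDerivAt_F p hzpos).hasFDerivWithinAt)
      (fun z hz => by
        have h1 := hball z hz
        have h2 := phi_lip p hp (x := z) (y := a) ha h1.1 h1.2 (by linarith) (by linarith)
        rw [Metric.mem_closedBall, dist_eq_norm] at hz
        calc ‖phi p z - phi p a‖ ≤ K1 p * ‖a‖ ^ (p-2) * ‖z - a‖ := h2
          _ ≤ K1 p * ‖a‖ ^ (p-2) * ‖b‖ := by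
              have := K1_pos p hp
              gcongr)
      (Metric.mem_closedBall_self hb0.le)
      (by rw [Metric.mem_closedBall, dist_eq_norm, add_sub_cancel_left])
    rw [add_sub_cancel_left] at mvt
    -- mvt : ‖F (a+b) - F a - phi p a b‖ ≤ K1 p * ‖a‖^(p-2) * ‖b‖ * ‖b‖
    have hchain : K1 p * ‖a‖ ^ (p-2) * ‖b‖ * ‖b‖ ≤ C * (‖a‖ ^ (p - 1 - ζ) * ‖b‖ ^ (1 + ζ) + ‖b‖ ^ p) := by
      have hba : ‖b‖ ≤ ‖a‖ := by linarith
      have e1 : ‖b‖ * ‖b‖ = ‖b‖ ^ (1+ζ) * ‖b‖ ^ (1-ζ) := by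
        rw [← Real.rpow_add hb0]
        have e : (1+ζ) + (1-ζ) = (2:ℝ) := by ring
        rw [e, Real.rpow_two, sq]
      have e2 : ‖a‖ ^ (p-2) = ‖a‖ ^ (p-1-ζ) * ‖a‖ ^ (ζ-1) := by
        rw [← Real.rpow_add ha0]
        ring_nf
      have e3 : ‖a‖ ^ (ζ-1) * ‖b‖ ^ (1-ζ) ≤ 1 := by
        have h1 : ‖b‖ ^ (1-ζ) ≤ ‖a‖ ^ (1-ζ) :=
          Real.rpow_le_rpow hb0.le hba (by linarith)
        have hpos : (0:ℝ) < ‖a‖ ^ (1-ζ) := Real.rpow_pos_of_pos ha0 _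
        have h2 : ‖a‖ ^ (ζ-1) = (‖a‖ ^ (1-ζ))⁻¹ := by
          rw [← Real.rpow_neg ha0.le]
          ring_nf
        rw [h2, inv_mul_eq_div]
        exact (div_le_one hpos).2 h1
      have hK1 := K1_pos p hp
      calc K1 p * ‖a‖ ^ (p-2) * ‖b‖ * ‖b‖
          = K1 p * (‖a‖ ^ (p-1-ζ) * ‖b‖ ^ (1+ζ)) * (‖a‖ ^ (ζ-1) * ‖b‖ ^ (1-ζ)) := by
            linear_combination (K1 p * ‖b‖ * ‖b‖) * e2
              + (K1 p * (‖a‖ ^ (p-1-ζ) * ‖a‖ ^ (ζ-1))) * e1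
        _ ≤ K1 p * (‖a‖ ^ (p-1-ζ) * ‖b‖ ^ (1+ζ)) * 1 := by
            have hnn : (0:ℝ) ≤ K1 p * (‖a‖ ^ (p-1-ζ) * ‖b‖ ^ (1+ζ)) := by positivity
            exact mul_le_mul_of_nonneg_left e3 hnn
        _ ≤ C * (‖a‖ ^ (p - 1 - ζ) * ‖b‖ ^ (1 + ζ) + ‖b‖ ^ p) := by
            have hCK : K1 p ≤ C := by rw [hC]; linarith
            nlinarith
    exact mvt.trans hchain
  · -- large perturbation case : ‖a‖ ≤ 2 ‖b‖
    have ha2b : ‖a‖ ≤ 2*‖b‖ := by linarith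
    have normF : ∀ z : ℂ, ‖(‖z‖ ^ (p-1) : ℝ) • z‖ = ‖z‖ ^ p := by
      intro z
      rw [norm_smul, Real.norm_eq_abs, abs_of_nonneg (Real.rpow_nonneg (norm_nonneg z) _)]
      rcases eq_or_ne (‖z‖) 0 with h | h
      · rw [h, mul_zero, Real.zero_rpow hp0.ne']
      · rw [← Real.rpow_add_one h]
        ring_nf
    have hbp : ‖b‖ ^ (p-1) * ‖b‖ = ‖b‖ ^ p := by
      rw [← Real.rpow_add_one hb0.ne']
      ring_nf
    have hT1 : ‖(‖a + b‖ ^ (p-1) : ℝ) • (a + b)‖ ≤ (3:ℝ)^p * ‖b‖ ^ p := by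
      rw [normF]
      calc ‖a + b‖ ^ p ≤ (3*‖b‖) ^ p := by
            apply Real.rpow_le_rpow (norm_nonneg _) _ hp0.le
            calc ‖a + b‖ ≤ ‖a‖ + ‖b‖ := norm_add_le a b
              _ ≤ 3*‖b‖ := by linarith
        _ = (3:ℝ)^p * ‖b‖ ^ p := Real.mul_rpow (by norm_num) (norm_nonneg b)
    have hT2 : ‖(‖a‖ ^ (p-1) : ℝ) • a‖ ≤ (2:ℝ)^p * ‖b‖ ^ p := by
      rw [normF]
      calc ‖a‖ ^ p ≤ (2*‖b‖) ^ p := Real.rpow_le_rpow (norm_nonneg _) ha2b hp0.le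
        _ = (2:ℝ)^p * ‖b‖ ^ p := Real.mul_rpow (by norm_num) (norm_nonneg b)
    have hap : ‖a‖ ^ (p-1) ≤ (2:ℝ)^(p-1) * ‖b‖ ^ (p-1) := by
      calc ‖a‖ ^ (p-1) ≤ (2*‖b‖) ^ (p-1) := Real.rpow_le_rpow (norm_nonneg _) ha2b hp1.le
        _ = (2:ℝ)^(p-1) * ‖b‖ ^ (p-1) := Real.mul_rpow (by norm_num) (norm_nonneg b)
    have hT3 : ‖(‖a‖ ^ (p-1) : ℝ) • b‖ ≤ (2:ℝ)^(p-1) * ‖b‖ ^ p := by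
      rw [norm_smul, Real.norm_eq_abs, abs_of_nonneg (Real.rpow_nonneg (norm_nonneg a) _)]
      calc ‖a‖ ^ (p-1) * ‖b‖ ≤ ((2:ℝ)^(p-1) * ‖b‖ ^ (p-1)) * ‖b‖ :=
            mul_le_mul_of_nonneg_right hap (norm_nonneg b)
        _ = (2:ℝ)^(p-1) * (‖b‖ ^ (p-1) * ‖b‖) := by ring
        _ = (2:ℝ)^(p-1) * ‖b‖ ^ p := by rw [hbp]
    have hT4 : ‖(((p - 1) * ‖a‖ ^ (p - 3) * (a * (starRingEnd ℂ) b).re : ℝ)) • a‖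
        ≤ (p-1) * (2:ℝ)^(p-1) * ‖b‖ ^ p := by
      rcases eq_or_ne a 0 with rfl | ha
      · simp only [smul_zero, norm_zero]
        positivity
      · have ha0 : (0:ℝ) < ‖a‖ := norm_pos_iff.2 ha
        have hre : |(a * (starRingEnd ℂ) b).re| ≤ ‖a‖ * ‖b‖ := by
          calc |(a * (starRingEnd ℂ) b).re| ≤ ‖a * (starRingEnd ℂ) b‖ :=
                Complex.abs_re_le_norm _
            _ = ‖a‖ * ‖b‖ := by rw [norm_mul, RCLike.norm_conj]
        rw [norm_smul, Real.norm_eq_abs, abs_mul, abs_mul, abs_of_pos hp1,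
          abs_of_nonneg (Real.rpow_nonneg (norm_nonneg a) _)]
        have e : ‖a‖ ^ (p-3) * ‖a‖ * ‖a‖ = ‖a‖ ^ (p-1) := by
          rw [← Real.rpow_add_one ha0.ne', ← Real.rpow_add_one ha0.ne']
          ring_nf
        calc (p-1) * ‖a‖ ^ (p-3) * |(a * (starRingEnd ℂ) b).re| * ‖a‖
            ≤ (p-1) * ‖a‖ ^ (p-3) * (‖a‖ * ‖b‖) * ‖a‖ := by
              gcongr
          _ = (p-1) * (‖a‖ ^ (p-1) * ‖b‖) := by rw [← e]; ring
          _ ≤ (p-1) * (((2:ℝ)^(p-1) * ‖b‖ ^ (p-1)) * ‖b‖) := by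
              gcongr
          _ = (p-1) * (2:ℝ)^(p-1) * (‖b‖ ^ (p-1) * ‖b‖) := by ring
          _ = (p-1) * (2:ℝ)^(p-1) * ‖b‖ ^ p := by rw [hbp]
    have htri : ‖(‖a + b‖ ^ (p - 1) : ℝ) • (a + b) - (‖a‖ ^ (p - 1) : ℝ) • a - phi p a b‖
        ≤ ‖(‖a + b‖ ^ (p-1) : ℝ) • (a + b)‖ + ‖(‖a‖ ^ (p-1) : ℝ) • a‖
          + ‖(‖a‖ ^ (p-1) : ℝ) • b‖
          + ‖(((p - 1) * ‖a‖ ^ (p - 3) * (a * (starRingEnd ℂ) b).re : ℝ)) • a‖ := by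
      have ephi : phi p a b = (‖a‖ ^ (p-1) : ℝ) • b
          + (((p - 1) * ‖a‖ ^ (p - 3) * (a * (starRingEnd ℂ) b).re : ℝ)) • a := by
        rw [phi_apply, ← hinner]
        match_scalars <;> ring
      rw [ephi]
      calc ‖_ - _ - (_ + _)‖ ≤ ‖(‖a + b‖ ^ (p-1) : ℝ) • (a + b) - (‖a‖ ^ (p-1) : ℝ) • a‖
            + ‖(‖a‖ ^ (p-1) : ℝ) • b + (((p - 1) * ‖a‖ ^ (p - 3) * (a * (starRingEnd ℂ) b).re : ℝ)) • a‖ :=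
            norm_sub_le _ _
        _ ≤ _ := by
            have h1 := norm_sub_le ((‖a + b‖ ^ (p-1) : ℝ) • (a + b)) ((‖a‖ ^ (p-1) : ℝ) • a)
            have h2 := norm_add_le ((‖a‖ ^ (p-1) : ℝ) • b)
              ((((p - 1) * ‖a‖ ^ (p - 3) * (a * (starRingEnd ℂ) b).re : ℝ)) • a)
            linarith
    have hsum : (3:ℝ)^p * ‖b‖ ^ p + (2:ℝ)^p * ‖b‖ ^ p + (2:ℝ)^(p-1) * ‖b‖ ^ p
        + (p-1) * (2:ℝ)^(p-1) * ‖b‖ ^ p = K2 * ‖b‖ ^ p := by rw [hK2]; ring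
    have hfin : K2 * ‖b‖ ^ p ≤ C * (‖a‖ ^ (p - 1 - ζ) * ‖b‖ ^ (1 + ζ) + ‖b‖ ^ p) := by
      have hCK : K2 ≤ C := by rw [hC]; linarith [K1_pos p hp]
      nlinarith
    calc ‖(‖a + b‖ ^ (p - 1) : ℝ) • (a + b) - (‖a‖ ^ (p - 1) : ℝ) • a - phi p a b‖
        ≤ _ := htri
      _ ≤ (3:ℝ)^p * ‖b‖ ^ p + (2:ℝ)^p * ‖b‖ ^ p + (2:ℝ)^(p-1) * ‖b‖ ^ p
          + (p-1) * (2:ℝ)^(p-1) * ‖b‖ ^ p := by linarith [hT1, hT2, hT3, hT4]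
      _ = K2 * ‖b‖ ^ p := hsum
      _ ≤ C * (‖a‖ ^ (p - 1 - ζ) * ‖b‖ ^ (1 + ζ) + ‖b‖ ^ p) := hfin
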